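/- Uniform concentration of truncated empirical means (total-variation case): Let S be a finite nonempty set, p a pmf on S, r_max > 0, γ ∈ [0,1), and V : S → ℝ with 0 ≤ V(s) ≤ r_max/(1−γ) for all s. Let δ ∈ (0,1), let N ≥ 1 be an integer with N ≥ log(18N/δ), and let p̂_N be the empirical pmf of N i.i.d. samples from p. Then with probability at least 1 − δ, max_{0 ≤ α ≤ max_{s∈S} V(s)} | E_p[(V)_α] − E_{p̂_N}[(V)_α] | ≤ 3·r_max·sqrt( log(18N/δ) / ((1−γ)²·N) ). -/

import Mathlib

open Finset MeasureTheory ProbabilityTheory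

/-- `p` is a probability mass function on the finite nonempty type `S`. -/
def IsPmf {S : Type*} [Fintype S] (p : S → ℝ) : Prop :=
  (∀ s, 0 ≤ p s) ∧ ∑ s, p s = 1

lemma exp_quad_bound {x : ℝ} (hx : |x| ≤ 1) : Real.exp x ≤ 1 + x + x ^ 2 := by
  have h := Real.exp_bound hx (n := 2) (by norm_num)
  have h2 : ∑ m ∈ Finset.range 2, x ^ m / m.factorial = 1 + x := by
    simp [Finset.sum_range_succ]
  rw [h2] at h
  have h3 : |x| ^ 2 * ((2 : ℕ).succ / ((2 : ℕ).factorial * 2)) ≤ x ^ 2 := by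
    rw [sq_abs]
    have h4 : (((2 : ℕ).succ : ℝ) / ((2 : ℕ).factorial * 2)) = 3 / 4 := by
      norm_num [Nat.factorial]
    rw [h4]
    nlinarith [sq_nonneg x]
  have := (abs_sub_le_iff.1 h).1
  linarith

/-- mgf bound for a bounded centered random variable. -/
lemma mgf_le_of_bound {Ω : Type*} [MeasurableSpace Ω] (μ : Measure Ω) [IsProbabilityMeasure μ]
    (Y : Ω → ℝ) (hmeas : Measurable Y) (M : ℝ) (hM : 0 < M)
    (hb : ∀ ω, |Y ω| ≤ M) (hmean : ∫ ω, Y ω ∂μ = 0)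
    (t : ℝ) (ht : 0 ≤ t) (htM : t * M ≤ 1) :
    mgf Y μ t ≤ Real.exp (t ^ 2 * M ^ 2) := by
  have hYint : Integrable Y μ :=
    (integrable_const M).mono' hmeas.aestronglyMeasurable (ae_of_all _ fun ω => by
      simpa [Real.norm_eq_abs] using hb ω)
  have hY2int : Integrable (fun ω => (Y ω) ^ 2) μ :=
    (integrable_const (M ^ 2)).mono' (hmeas.pow_const 2).aestronglyMeasurable
      (ae_of_all _ fun ω => by
        rw [Real.norm_eq_abs, abs_pow]
        exact pow_le_pow_left₀ (abs_nonneg _) (hb ω) 2)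
  have hexpint : Integrable (fun ω => Real.exp (t * Y ω)) μ :=
    (integrable_const (Real.exp (t * M))).mono'
      ((hmeas.const_mul t).exp).aestronglyMeasurable (ae_of_all _ fun ω => by
        rw [Real.norm_eq_abs, Real.abs_exp, Real.exp_le_exp]
        calc t * Y ω ≤ t * |Y ω| := by
              exact mul_le_mul_of_nonneg_left (le_abs_self _) ht
          _ ≤ t * M := mul_le_mul_of_nonneg_left (hb ω) ht)
  have hpt : ∀ ω, Real.exp (t * Y ω) ≤ 1 + t * Y ω + t ^ 2 * (Y ω) ^ 2 := by
    intro ω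
    have habs : |t * Y ω| ≤ 1 := by
      rw [abs_mul, abs_of_nonneg ht]
      exact le_trans (mul_le_mul_of_nonneg_left (hb ω) ht) htM
    have := exp_quad_bound habs
    calc Real.exp (t * Y ω) ≤ 1 + t * Y ω + (t * Y ω) ^ 2 := this
      _ = 1 + t * Y ω + t ^ 2 * (Y ω) ^ 2 := by ring
  have hint : mgf Y μ t ≤ ∫ ω, (1 + t * Y ω + t ^ 2 * (Y ω) ^ 2) ∂μ := by
    refine integral_mono hexpint ?_ hpt
    exact ((integrable_const 1).add (hYint.const_mul t)).add (hY2int.const_mul (t ^ 2))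
  have h1 : Integrable (fun ω => 1 + t * Y ω) μ := (integrable_const 1).add (hYint.const_mul t)
  have h2 : Integrable (fun ω => t ^ 2 * (Y ω) ^ 2) μ := hY2int.const_mul (t ^ 2)
  have hcomp : ∫ ω, (1 + t * Y ω + t ^ 2 * (Y ω) ^ 2) ∂μ = 1 + t ^ 2 * ∫ ω, (Y ω) ^ 2 ∂μ := by
    rw [integral_add h1 h2, integral_add (integrable_const 1) (hYint.const_mul t),
      integral_const, integral_const_mul, integral_const_mul, hmean]
    simp
  have hvar : ∫ ω, (Y ω) ^ 2 ∂μ ≤ M ^ 2 := by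
    calc ∫ ω, (Y ω) ^ 2 ∂μ ≤ ∫ _, M ^ 2 ∂μ := by
          refine integral_mono hY2int (integrable_const _) fun ω => ?_
          have := hb ω
          nlinarith [abs_nonneg (Y ω), sq_abs (Y ω)]
      _ = M ^ 2 := by simp
  calc mgf Y μ t ≤ 1 + t ^ 2 * ∫ ω, (Y ω) ^ 2 ∂μ := hint.trans_eq hcomp
    _ ≤ 1 + t ^ 2 * M ^ 2 := by nlinarith [sq_nonneg t]
    _ ≤ Real.exp (t ^ 2 * M ^ 2) := by
        have := Real.add_one_le_exp (t ^ 2 * M ^ 2)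
        linarith

/-- One-sided Hoeffding-type tail bound for sums of independent bounded centered variables. -/
lemma sum_tail_bound {Ω : Type*} [MeasurableSpace Ω] (μ : Measure Ω) [IsProbabilityMeasure μ]
    {N : ℕ} (Y : Fin N → Ω → ℝ) (hmeas : ∀ i, Measurable (Y i))
    (hindep : iIndepFun Y μ)
    (M : ℝ) (hM : 0 < M) (hb : ∀ i ω, |Y i ω| ≤ M) (hmean : ∀ i, ∫ ω, Y i ω ∂μ = 0)
    (ε : ℝ) (hε : 0 < ε) (hεM : ε ≤ 2 * M) :
    μ {ω | (N : ℝ) * ε ≤ ∑ i, Y i ω} ≤ ENNReal.ofReal (Real.exp (-(N * ε ^ 2) / (4 * M ^ 2))) := by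
  set t : ℝ := ε / (2 * M ^ 2) with ht_def
  have ht : 0 < t := div_pos hε (by positivity)
  have htM : t * M ≤ 1 := by
    rw [ht_def, div_mul_eq_mul_div, div_le_one (by positivity)]
    nlinarith
  have hexpint : ∀ i, Integrable (fun ω => Real.exp (t * Y i ω)) μ := fun i =>
    (integrable_const (Real.exp (t * M))).mono'
      (((hmeas i).const_mul t).exp).aestronglyMeasurable (ae_of_all _ fun ω => by
        rw [Real.norm_eq_abs, Real.abs_exp, Real.exp_le_exp]
        calc t * Y i ω ≤ t * |Y i ω| := mul_le_mul_of_nonneg_left (le_abs_self _) ht.le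
          _ ≤ t * M := mul_le_mul_of_nonneg_left (hb i ω) ht.le)
  have hsumint : Integrable (fun ω => Real.exp (t * (∑ i, Y i) ω)) μ :=
    hindep.integrable_exp_mul_sum hmeas (fun i _ => hexpint i)
  have hch := measure_ge_le_exp_mul_mgf (X := ∑ i, Y i) (μ := μ) (t := t)
    ((N : ℝ) * ε) ht.le hsumint
  have hmgf : mgf (∑ i, Y i) μ t ≤ Real.exp ((N : ℝ) * (t ^ 2 * M ^ 2)) := by
    rw [hindep.mgf_sum hmeas]
    calc ∏ i, mgf (Y i) μ t ≤ ∏ _i : Fin N, Real.exp (t ^ 2 * M ^ 2) := by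
          refine Finset.prod_le_prod (fun i _ => mgf_nonneg) fun i _ => ?_
          exact mgf_le_of_bound μ (Y i) (hmeas i) M hM (hb i) (hmean i) t ht.le htM
      _ = Real.exp ((N : ℝ) * (t ^ 2 * M ^ 2)) := by
          rw [Finset.prod_const, ← Real.exp_nat_mul]
          simp
  have hset : {ω | (N : ℝ) * ε ≤ ∑ i, Y i ω} = {ω | (N : ℝ) * ε ≤ (∑ i, Y i) ω} := by
    simp [Finset.sum_apply]
  rw [hset]
  rw [ENNReal.le_ofReal_iff_toReal_le (measure_ne_top _ _) (Real.exp_nonneg _)]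
  calc (μ {ω | (N : ℝ) * ε ≤ (∑ i, Y i) ω}).toReal
      ≤ Real.exp (-t * ((N : ℝ) * ε)) * mgf (∑ i, Y i) μ t := hch
    _ ≤ Real.exp (-t * ((N : ℝ) * ε)) * Real.exp ((N : ℝ) * (t ^ 2 * M ^ 2)) := by
        exact mul_le_mul_of_nonneg_left hmgf (Real.exp_nonneg _)
    _ = Real.exp (-t * ((N : ℝ) * ε) + (N : ℝ) * (t ^ 2 * M ^ 2)) := (Real.exp_add _ _).symm
    _ = Real.exp (-(N * ε ^ 2) / (4 * M ^ 2)) := by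
        congr 1
        rw [ht_def]
        field_simp
        ring

lemma integral_comp_of_law {S : Type*} [Fintype S] [DecidableEq S] [MeasurableSpace S]
    [MeasurableSingletonClass S] {Ω : Type*} [MeasurableSpace Ω] (μ : Measure Ω)
    [IsProbabilityMeasure μ] (X : Ω → S) (hX : Measurable X) (F : S → ℝ) :
    ∫ ω, F (X ω) ∂μ = ∑ s, (μ (X ⁻¹' {s})).toReal * F s := by
  have heq : (fun ω => F (X ω)) =
      fun ω => ∑ s, Set.indicator (X ⁻¹' {s}) (fun _ => F s) ω := by
    funext ω
    classical
    show F (X ω) = ∑ s, Set.indicator (X ⁻¹' {s}) (fun _ => F s) ω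
    simp only [Set.indicator_apply, Set.mem_preimage, Set.mem_singleton_iff]
    rw [Finset.sum_ite_eq]
    simp
  rw [heq, integral_finset_sum]
  · refine Finset.sum_congr rfl fun s _ => ?_
    rw [integral_indicator_const (F s) (hX (measurableSet_singleton s)), smul_eq_mul]
    rfl
  · exact fun s _ => (integrable_const (F s)).indicator (hX (measurableSet_singleton s))

lemma sum_comp_eq_card {S : Type*} [Fintype S] [DecidableEq S] {N : ℕ}
    (F : S → ℝ) (x : Fin N → S) :
    ∑ i, F (x i) = ∑ s, ((Finset.univ.filter (fun i => x i = s)).card : ℝ) * F s := by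
  have h : ∀ s : S, ((Finset.univ.filter (fun i => x i = s)).card : ℝ) * F s
      = ∑ i, if x i = s then F s else 0 := by
    intro s
    rw [← Finset.sum_filter, Finset.sum_const, nsmul_eq_mul]
  simp_rw [h]
  rw [Finset.sum_comm]
  refine Finset.sum_congr rfl fun i _ => ?_
  rw [Finset.sum_ite_eq]
  simp

lemma abs_min_sub_min_le' (a α β : ℝ) : |min a α - min a β| ≤ |α - β| := by
  have := abs_min_sub_min_le_max a α a β
  simpa using this

set_option maxHeartbeats 4000000 in
/-- Uniform concentration of truncated empirical means (total-variation case). -/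
theorem tv_uniform_concentration
    {S : Type*} [Fintype S] [Nonempty S] [DecidableEq S]
    [MeasurableSpace S] [MeasurableSingletonClass S]
    {Ω : Type*} [MeasurableSpace Ω] (μ : Measure Ω) [IsProbabilityMeasure μ]
    (p : S → ℝ) (hp : IsPmf p)
    (rmax : ℝ) (hrmax : 0 < rmax)
    (γ : ℝ) (hγ0 : 0 ≤ γ) (hγ1 : γ < 1)
    (V : S → ℝ) (hV : ∀ s, 0 ≤ V s ∧ V s ≤ rmax / (1 - γ))
    (δ : ℝ) (hδ0 : 0 < δ) (hδ1 : δ < 1)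
    (N : ℕ) (hN1 : 1 ≤ N) (hNlog : Real.log (18 * N / δ) ≤ N)
    (X : Fin N → Ω → S) (hXmeas : ∀ i, Measurable (X i))
    (hXiid : iIndepFun X μ)
    (hXlaw : ∀ i s, μ (X i ⁻¹' {s}) = ENNReal.ofReal (p s)) :
    ENNReal.ofReal (1 - δ) ≤
      μ {ω | ∀ α : ℝ, 0 ≤ α → α ≤ (⨆ s, V s) →
          |(∑ s, p s * min (V s) α)
            - ∑ s, ((((Finset.univ.filter (fun i => X i ω = s)).card : ℝ) / N)
                * min (V s) α)|
          ≤ 3 * rmax * Real.sqrt (Real.log (18 * N / δ) / ((1 - γ) ^ 2 * N))} := by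
  classical
  obtain ⟨hp0, hp1⟩ := hp
  have h1γ : 0 < 1 - γ := by linarith
  set M : ℝ := rmax / (1 - γ) with hM_def
  have hM : 0 < M := div_pos hrmax h1γ
  set L : ℝ := Real.log (18 * N / δ) with hL_def
  have hN0 : (0 : ℝ) < N := by exact_mod_cast Nat.lt_of_lt_of_le Nat.zero_lt_one hN1
  have hN1' : (1 : ℝ) ≤ N := by exact_mod_cast hN1
  have hq0 : (0 : ℝ) < 18 * N / δ := by positivity
  have hL1 : 1 ≤ L := by
    rw [hL_def, Real.le_log_iff_exp_le hq0]
    have he : Real.exp 1 < 2.7182818286 := Real.exp_one_lt_d9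
    have h18' : (18 : ℝ) ≤ 18 * N / δ := by
      rw [le_div_iff₀ hδ0]
      nlinarith
    linarith
  have hL0 : 0 < L := lt_of_lt_of_le zero_lt_one hL1
  have hLN : L ≤ N := hNlog
  set σ : ℝ := Real.sqrt (L / N) with hσ_def
  have hσ0 : 0 < σ := Real.sqrt_pos.2 (div_pos hL0 hN0)
  have hσ1 : σ ≤ 1 := by
    rw [hσ_def]
    rw [show (1 : ℝ) = Real.sqrt 1 from (Real.sqrt_one).symm]
    exact Real.sqrt_le_sqrt ((div_le_one hN0).2 hLN)
  have hσsq : σ ^ 2 = L / N := Real.sq_sqrt (le_of_lt (div_pos hL0 hN0))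
  set ε₁ : ℝ := 2 * M * σ with hε₁_def
  have hε₁0 : 0 < ε₁ := by positivity
  -- the right-hand side bound equals 3 * M * σ
  have hRHS : 3 * rmax * Real.sqrt (L / ((1 - γ) ^ 2 * N)) = 3 * M * σ := by
    have h1 : L / ((1 - γ) ^ 2 * N) = (L / N) / (1 - γ) ^ 2 := by
      rw [div_div, mul_comm]
    rw [h1, Real.sqrt_div (le_of_lt (div_pos hL0 hN0)), Real.sqrt_sq h1γ.le, hσ_def, hM_def]
    ring
  -- grid
  set c : ℝ := M / (8 * N) with hc_def
  have hc0 : 0 < c := by positivity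
  set f : ℕ → S → ℝ := fun k s => min (V s) (k * c) with hf_def
  set m : ℕ → ℝ := fun k => ∑ s, p s * f k s with hm_def
  set Y : ℕ → Fin N → Ω → ℝ := fun k i ω => m k - f k (X i ω) with hY_def
  have hVM : ∀ s, V s ≤ M := fun s => (hV s).2
  have hf0 : ∀ k s, 0 ≤ f k s := fun k s => le_min (hV s).1 (by positivity)
  have hfM : ∀ k s, f k s ≤ M := fun k s => le_trans (min_le_left _ _) (hVM s)
  have hm0 : ∀ k, 0 ≤ m k := fun k => Finset.sum_nonneg fun s _ =>
    mul_nonneg (hp0 s) (hf0 k s)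
  have hmM : ∀ k, m k ≤ M := by
    intro k
    calc m k ≤ ∑ s, p s * M :=
          Finset.sum_le_sum fun s _ => mul_le_mul_of_nonneg_left (hfM k s) (hp0 s)
      _ = M := by rw [← Finset.sum_mul, hp1, one_mul]
  have hYb : ∀ k i ω, |Y k i ω| ≤ M := by
    intro k i ω
    rw [abs_le]
    constructor
    · have := hmM k; have := hfM k (X i ω); have := hm0 k; have := hf0 k (X i ω)
      simp only [hY_def]; linarith
    · have := hmM k; have := hf0 k (X i ω)
      simp only [hY_def]; linarith
  have hYmeas : ∀ k i, Measurable (Y k i) := fun k i =>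
    (measurable_of_countable (fun s => m k - f k s)).comp (hXmeas i)
  have hYindep : ∀ k, iIndepFun (Y k) μ := fun k =>
    hXiid.comp (fun _ s => m k - f k s) (fun _ => measurable_of_countable _)
  have hYmean : ∀ k i, ∫ ω, Y k i ω ∂μ = 0 := by
    intro k i
    have hint : Integrable (fun ω => f k (X i ω)) μ :=
      (integrable_const M).mono'
        ((measurable_of_countable (f k)).comp (hXmeas i)).aestronglyMeasurable
        (ae_of_all _ fun ω => by
          rw [Real.norm_eq_abs, abs_of_nonneg (hf0 k (X i ω))]; exact hfM k _)
    have : ∫ ω, Y k i ω ∂μ = m k - ∫ ω, f k (X i ω) ∂μ := by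
      simp only [hY_def]
      rw [integral_sub (integrable_const _) hint, integral_const]
      simp
    rw [this, integral_comp_of_law μ (X i) (hXmeas i) (f k)]
    have : ∀ s : S, (μ (X i ⁻¹' {s})).toReal = p s := by
      intro s; rw [hXlaw i s, ENNReal.toReal_ofReal (hp0 s)]
    simp_rw [this]
    simp [hm_def]
  -- per grid point tail bound
  have htail : ∀ k, μ {ω | (N : ℝ) * ε₁ ≤ ∑ i, Y k i ω}
      ≤ ENNReal.ofReal (δ / (18 * N)) := by
    intro k
    have h := sum_tail_bound μ (Y k) (hYmeas k) (hYindep k) M hM (hYb k) (hYmean k)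
      ε₁ hε₁0 (by nlinarith)
    refine h.trans (le_of_eq ?_)
    congr 1
    have hε₁sq : ε₁ ^ 2 = 4 * M ^ 2 * (L / N) := by
      rw [hε₁_def]; rw [mul_pow, mul_pow, ← hσsq]; ring
    have harg : -((N : ℝ) * ε₁ ^ 2) / (4 * M ^ 2) = -L := by
      have hNne : (N : ℝ) ≠ 0 := ne_of_gt hN0
      have hMne : M ≠ 0 := ne_of_gt hM
      rw [hε₁sq]; field_simp
    rw [harg, Real.exp_neg, hL_def, Real.exp_log hq0]
    field_simp
  have htail' : ∀ k, μ {ω | (N : ℝ) * ε₁ ≤ ∑ i, (fun ω' => - Y k i ω') ω}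
      ≤ ENNReal.ofReal (δ / (18 * N)) := by
    intro k
    have h := sum_tail_bound μ (fun i ω => - Y k i ω)
      (fun i => (hYmeas k i).neg)
      ((hYindep k).comp (fun _ x => -x) (fun _ => measurable_neg))
      M hM (fun i ω => by rw [abs_neg]; exact hYb k i ω)
      (fun i => by rw [integral_neg, hYmean k i, neg_zero])
      ε₁ hε₁0 (by nlinarith)
    exact h.trans (le_of_eq (by
      congr 1
      have hε₁sq : ε₁ ^ 2 = 4 * M ^ 2 * (L / N) := by
        rw [hε₁_def]; rw [mul_pow, mul_pow, ← hσsq]; ring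
      have harg : -((N : ℝ) * ε₁ ^ 2) / (4 * M ^ 2) = -L := by
        have hNne : (N : ℝ) ≠ 0 := ne_of_gt hN0
        have hMne : M ≠ 0 := ne_of_gt hM
        rw [hε₁sq]; field_simp
      rw [harg, Real.exp_neg, hL_def, Real.exp_log hq0]
      field_simp))
  -- bad event
  set Bad : Set Ω := ⋃ k ∈ Finset.range (8 * N + 1),
    ({ω | (N : ℝ) * ε₁ ≤ ∑ i, Y k i ω} ∪ {ω | (N : ℝ) * ε₁ ≤ ∑ i, - Y k i ω}) with hBad_def
  have hBadMeas : MeasurableSet Bad := by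
    refine MeasurableSet.biUnion (Finset.range (8 * N + 1)).countable_toSet fun k _ => ?_
    refine MeasurableSet.union ?_ ?_
    · exact measurableSet_le measurable_const (Finset.measurable_sum _ fun i _ => hYmeas k i)
    · exact measurableSet_le measurable_const
        (Finset.measurable_sum _ fun i _ => (hYmeas k i).neg)
  have hBadBound : μ Bad ≤ ENNReal.ofReal δ := by
    calc μ Bad ≤ ∑ k ∈ Finset.range (8 * N + 1),
          μ ({ω | (N : ℝ) * ε₁ ≤ ∑ i, Y k i ω} ∪ {ω | (N : ℝ) * ε₁ ≤ ∑ i, - Y k i ω}) :=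
        measure_biUnion_finset_le _ _
      _ ≤ ∑ _k ∈ Finset.range (8 * N + 1), ENNReal.ofReal (δ / (9 * N)) := by
          refine Finset.sum_le_sum fun k _ => ?_
          calc μ _ ≤ μ {ω | (N : ℝ) * ε₁ ≤ ∑ i, Y k i ω}
                + μ {ω | (N : ℝ) * ε₁ ≤ ∑ i, - Y k i ω} := measure_union_le _ _
            _ ≤ ENNReal.ofReal (δ / (18 * N)) + ENNReal.ofReal (δ / (18 * N)) :=
                add_le_add (htail k) (htail' k)
            _ = ENNReal.ofReal (δ / (9 * N)) := by
                rw [← ENNReal.ofReal_add (by positivity) (by positivity)]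
                congr 1
                field_simp
                ring
      _ = ((8 * N + 1 : ℕ) : ENNReal) * ENNReal.ofReal (δ / (9 * N)) := by
          rw [Finset.sum_const, Finset.card_range, nsmul_eq_mul]
      _ ≤ ENNReal.ofReal δ := by
          rw [show ((8 * N + 1 : ℕ) : ENNReal) = ENNReal.ofReal ((8 * N + 1 : ℕ) : ℝ) by
            rw [ENNReal.ofReal_natCast]]
          rw [← ENNReal.ofReal_mul (by positivity)]
          refine ENNReal.ofReal_le_ofReal ?_
          have hcast : ((8 * N + 1 : ℕ) : ℝ) = 8 * (N : ℝ) + 1 := by push_cast; ring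
          rw [hcast, div_eq_mul_inv]
          rw [show (8 * (N : ℝ) + 1) * (δ * (9 * (N : ℝ))⁻¹)
              = (8 * (N : ℝ) + 1) / (9 * N) * δ by ring]
          have : (8 * (N : ℝ) + 1) / (9 * N) ≤ 1 := by
            rw [div_le_one (by positivity)]
            linarith
          nlinarith
  -- deterministic part: on the complement of Bad, uniform bound holds
  have hsubset : Badᶜ ⊆ {ω | ∀ α : ℝ, 0 ≤ α → α ≤ (⨆ s, V s) →
      |(∑ s, p s * min (V s) α)
        - ∑ s, ((((Finset.univ.filter (fun i => X i ω = s)).card : ℝ) / N)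
            * min (V s) α)|
      ≤ 3 * rmax * Real.sqrt (L / ((1 - γ) ^ 2 * N))} := by
    intro ω hω
    simp only [hBad_def, Set.mem_compl_iff, Set.mem_iUnion, Set.mem_union, Set.mem_setOf_eq,
      not_exists, not_or, Finset.mem_coe, Finset.mem_range] at hω
    intro α hα0 hαsup
    have hαM : α ≤ M := le_trans hαsup (ciSup_le fun s => hVM s)
    -- the empirical pmf
    set q : S → ℝ := fun s => ((Finset.univ.filter (fun i => X i ω = s)).card : ℝ) / N
      with hq_def
    have hq0' : ∀ s, 0 ≤ q s := fun s => div_nonneg (Nat.cast_nonneg _) (Nat.cast_nonneg _)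
    have hq1 : ∑ s, q s = 1 := by
      rw [hq_def]
      rw [← Finset.sum_div]
      rw [show ∑ s, ((Finset.univ.filter (fun i => X i ω = s)).card : ℝ)
          = ((∑ s, (Finset.univ.filter (fun i => X i ω = s)).card : ℕ) : ℝ) by push_cast; ring]
      rw [← Finset.card_eq_sum_card_fiberwise (fun i _ => Finset.mem_univ (X i ω))]
      rw [Finset.card_univ, Fintype.card_fin]
      field_simp
    -- choose grid point
    set k : ℕ := ⌊α / c⌋₊ with hk_def
    have hαc : 0 ≤ α / c := div_nonneg hα0 hc0.le
    have hfl1 : (k : ℝ) ≤ α / c := Nat.floor_le hαc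
    have hfl2 : α / c < k + 1 := Nat.lt_floor_add_one _
    have hk8 : k < 8 * N + 1 := by
      have h2 : α / c ≤ 8 * N := by
        rw [div_le_iff₀ hc0]
        calc α ≤ M := hαM
          _ = 8 * N * c := by rw [hc_def]; field_simp
      have h3 : (k : ℝ) < 8 * N + 1 := by linarith only [hfl1, h2]
      exact_mod_cast h3
    set β : ℝ := k * c with hβ_def
    have hβ0 : 0 ≤ β := by
      rw [hβ_def]; positivity
    have hβα : β ≤ α := by
      have h1 : (k : ℝ) * c ≤ α / c * c := mul_le_mul_of_nonneg_right hfl1 hc0.le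
      rw [div_mul_cancel₀ _ (ne_of_gt hc0)] at h1
      rw [hβ_def]; exact h1
    have hαβ : α - β ≤ c := by
      have h2 : α < ((k : ℝ) + 1) * c := by
        have h1 : α / c * c < ((k : ℝ) + 1) * c := mul_lt_mul_of_pos_right hfl2 hc0
        rwa [div_mul_cancel₀ _ (ne_of_gt hc0)] at h1
      rw [hβ_def]
      linarith only [h2]
    -- diff at grid point
    have hωk := hω k hk8
    have hsum : ∑ i, Y k i ω = (N : ℝ) * (m k - ∑ s, q s * f k s) := by
      have h1 : ∑ i, Y k i ω = (N : ℝ) * m k - ∑ i, f k (X i ω) := by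
        simp only [hY_def]
        rw [Finset.sum_sub_distrib, Finset.sum_const, Finset.card_univ, Fintype.card_fin,
          nsmul_eq_mul]
      rw [h1, sum_comp_eq_card (f k) (fun i => X i ω)]
      have h2 : ∑ s, q s * f k s
          = ∑ s, ((Finset.univ.filter (fun i => X i ω = s)).card : ℝ) * f k s / N := by
        refine Finset.sum_congr rfl fun s _ => ?_
        rw [hq_def]; ring
      rw [h2, ← Finset.sum_div]
      field_simp
    have hgrid : |m k - ∑ s, q s * f k s| ≤ ε₁ := by
      have habs : |∑ i, Y k i ω| ≤ (N : ℝ) * ε₁ := by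
        rw [abs_le]
        constructor
        · have hns : ∑ i, - Y k i ω < (N : ℝ) * ε₁ := not_le.1 hωk.2
          rw [Finset.sum_neg_distrib] at hns
          linarith only [hns]
        · exact le_of_lt (not_le.1 hωk.1)
      rw [hsum, abs_mul, abs_of_pos hN0] at habs
      exact le_of_mul_le_mul_left habs hN0
    -- move from the grid point to α
    have hfβ : ∀ s, f k s = min (V s) β := fun s => by
      simp only [hf_def, hβ_def]
    have hgrid' : |(∑ s, p s * min (V s) β) - ∑ s, q s * min (V s) β| ≤ ε₁ := by
      have h2 : ∑ s, p s * min (V s) β = m k := by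
        rw [hm_def]
      have h3 : ∑ s, q s * min (V s) β = ∑ s, q s * f k s :=
        Finset.sum_congr rfl fun s _ => by rw [hfβ s]
      rw [h2, h3]; exact hgrid
    have hd1 : |(∑ s, p s * min (V s) α) - ∑ s, p s * min (V s) β| ≤ α - β := by
      rw [← Finset.sum_sub_distrib]
      calc |∑ s, (p s * min (V s) α - p s * min (V s) β)|
          ≤ ∑ s, |p s * min (V s) α - p s * min (V s) β| :=
            Finset.abs_sum_le_sum_abs _ _
        _ ≤ ∑ s, p s * (α - β) := by
            refine Finset.sum_le_sum fun s _ => ?_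
            rw [← mul_sub, abs_mul, abs_of_nonneg (hp0 s)]
            refine mul_le_mul_of_nonneg_left ?_ (hp0 s)
            have h := abs_min_sub_min_le' (V s) α β
            rwa [abs_of_nonneg (by linarith only [hβα] : (0:ℝ) ≤ α - β)] at h
        _ = α - β := by rw [← Finset.sum_mul, hp1, one_mul]
    have hd2 : |(∑ s, q s * min (V s) α) - ∑ s, q s * min (V s) β| ≤ α - β := by
      rw [← Finset.sum_sub_distrib]
      calc |∑ s, (q s * min (V s) α - q s * min (V s) β)|
          ≤ ∑ s, |q s * min (V s) α - q s * min (V s) β| :=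
            Finset.abs_sum_le_sum_abs _ _
        _ ≤ ∑ s, q s * (α - β) := by
            refine Finset.sum_le_sum fun s _ => ?_
            rw [← mul_sub, abs_mul, abs_of_nonneg (hq0' s)]
            refine mul_le_mul_of_nonneg_left ?_ (hq0' s)
            have h := abs_min_sub_min_le' (V s) α β
            rwa [abs_of_nonneg (by linarith only [hβα] : (0:ℝ) ≤ α - β)] at h
        _ = α - β := by rw [← Finset.sum_mul, hq1, one_mul]
    have hσlb : 1 / (4 * (N : ℝ)) ≤ σ := by
      rw [hσ_def, Real.le_sqrt (by positivity) (le_of_lt (div_pos hL0 hN0))]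
      rw [div_pow, one_pow, div_le_div_iff₀ (by positivity) hN0]
      have e1 : (1 : ℝ) * (4 * (N : ℝ)) ^ 2 ≤ L * (4 * (N : ℝ)) ^ 2 :=
        mul_le_mul_of_nonneg_right hL1 (by positivity)
      have e2 : (16 : ℝ) * N * 1 ≤ 16 * N * N :=
        mul_le_mul_of_nonneg_left hN1' (by positivity)
      nlinarith only [e1, e2, hN1']
    have h2c : 2 * c ≤ M * σ := by
      have hc2 : 2 * c = M * (1 / (4 * (N : ℝ))) := by
        rw [hc_def]; ring
      rw [hc2]
      exact mul_le_mul_of_nonneg_left hσlb hM.le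
    have hfinal : |(∑ s, p s * min (V s) α) - ∑ s, q s * min (V s) α| ≤ 3 * M * σ := by
      have heq : (∑ s, p s * min (V s) α) - ∑ s, q s * min (V s) α
          = ((∑ s, p s * min (V s) β) - ∑ s, q s * min (V s) β)
            + ((∑ s, p s * min (V s) α) - ∑ s, p s * min (V s) β)
            + ((∑ s, q s * min (V s) β) - ∑ s, q s * min (V s) α) := by ring
      have t3 : |(∑ s, q s * min (V s) β) - ∑ s, q s * min (V s) α| ≤ α - β := by
        rw [abs_sub_comm]; exact hd2
      have hε₁' : ε₁ = 2 * M * σ := hε₁_def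
      calc |(∑ s, p s * min (V s) α) - ∑ s, q s * min (V s) α|
          = |((∑ s, p s * min (V s) β) - ∑ s, q s * min (V s) β)
            + ((∑ s, p s * min (V s) α) - ∑ s, p s * min (V s) β)
            + ((∑ s, q s * min (V s) β) - ∑ s, q s * min (V s) α)| := by rw [heq]
        _ ≤ |((∑ s, p s * min (V s) β) - ∑ s, q s * min (V s) β)
            + ((∑ s, p s * min (V s) α) - ∑ s, p s * min (V s) β)|
            + |(∑ s, q s * min (V s) β) - ∑ s, q s * min (V s) α| := abs_add_le _ _
        _ ≤ (|(∑ s, p s * min (V s) β) - ∑ s, q s * min (V s) β|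
            + |(∑ s, p s * min (V s) α) - ∑ s, p s * min (V s) β|)
            + |(∑ s, q s * min (V s) β) - ∑ s, q s * min (V s) α| :=
            add_le_add_left (abs_add_le _ _) _
        _ ≤ (ε₁ + (α - β)) + (α - β) := add_le_add (add_le_add hgrid' hd1) t3
        _ ≤ 2 * M * σ + c + c := by
            rw [hε₁']
            have := hαβ
            linarith only [hαβ]
        _ = 2 * M * σ + 2 * c := by ring
        _ ≤ 2 * M * σ + M * σ := by linarith only [h2c]
        _ = 3 * M * σ := by ring
    rw [hRHS]
    exact hfinal
  -- conclusion
  have hcompl : ENNReal.ofReal (1 - δ) ≤ μ Badᶜ := by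
    rw [prob_compl_eq_one_sub hBadMeas]
    calc ENNReal.ofReal (1 - δ) = 1 - ENNReal.ofReal δ := by
          rw [ENNReal.ofReal_sub 1 hδ0.le, ENNReal.ofReal_one]
      _ ≤ 1 - μ Bad := tsub_le_tsub_left hBadBound 1
  exact le_trans hcompl (measure_mono hsubset)
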